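/- arXiv:1601.02813 — 4 statements merged into one kernel-verified Lean document; each statement's English description precedes it below -/
import Mathlib

section
/- Let P ∈ ℤ[X₁,…,X_k] have absolute degree r and let V = {z ∈ ℝ^k : P(z) = 0}. Let T = V ∩ ℚ^k. Let ψ : ℝ → ℝ satisfy ψ(t) = o(t^(−r+1)) as t → ∞. If ζ ∈ V and for arbitrarily large integers x there exist integers y₁,…,y_k with max_j |x ζ_j − y_j| ≤ ψ(x), then ζ lies in the topological closure of T. -/
open Filter

private lemma abs_pow_sub_pow_le' {a b B δ : ℝ} (n : ℕ) (ha : |a| ≤ B) (hb : |b| ≤ B)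
    (hab : |a - b| ≤ δ) (hB : 1 ≤ B) :
    |a ^ n - b ^ n| ≤ n * B ^ n * δ := by
  have hδ : 0 ≤ δ := le_trans (abs_nonneg _) hab
  have hB0 : 0 ≤ B := le_trans zero_le_one hB
  rw [← geom_sum₂_mul a b n, abs_mul]
  have h1 : |∑ i ∈ Finset.range n, a ^ i * b ^ (n - 1 - i)| ≤ n * B ^ n := by
    calc |∑ i ∈ Finset.range n, a ^ i * b ^ (n - 1 - i)|
        ≤ ∑ i ∈ Finset.range n, |a ^ i * b ^ (n - 1 - i)| := Finset.abs_sum_le_sum_abs _ _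
      _ ≤ ∑ _i ∈ Finset.range n, B ^ n := by
          refine Finset.sum_le_sum fun i hi => ?_
          rw [abs_mul, abs_pow, abs_pow]
          calc |a| ^ i * |b| ^ (n - 1 - i) ≤ B ^ i * B ^ (n - 1 - i) := by
                exact mul_le_mul (pow_le_pow_left₀ (abs_nonneg _) ha i)
                  (pow_le_pow_left₀ (abs_nonneg _) hb _) (by positivity) (by positivity)
            _ = B ^ (i + (n - 1 - i)) := (pow_add B i (n - 1 - i)).symm
            _ ≤ B ^ n := by
                refine pow_le_pow_right₀ hB ?_
                have := Finset.mem_range.mp hi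
                omega
      _ = n * B ^ n := by rw [Finset.sum_const, Finset.card_range, nsmul_eq_mul]
  calc |∑ i ∈ Finset.range n, a ^ i * b ^ (n - 1 - i)| * |a - b|
      ≤ (n * B ^ n) * δ := mul_le_mul h1 hab (abs_nonneg _) (by positivity)
    _ = n * B ^ n * δ := rfl

private lemma abs_prod_pow_le {ι : Type*} (s : Finset ι) (a : ι → ℝ) (n : ι → ℕ) {B : ℝ}
    (hB : 1 ≤ B) (ha : ∀ i ∈ s, |a i| ≤ B) :
    |∏ i ∈ s, a i ^ n i| ≤ B ^ (∑ i ∈ s, n i) := by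
  rw [Finset.abs_prod]
  calc ∏ i ∈ s, |a i ^ n i| ≤ ∏ i ∈ s, B ^ n i := by
        refine Finset.prod_le_prod (fun i _ => abs_nonneg _) fun i hi => ?_
        rw [abs_pow]
        exact pow_le_pow_left₀ (abs_nonneg _) (ha i hi) _
    _ = B ^ (∑ i ∈ s, n i) := by rw [Finset.prod_pow_eq_pow_sum]

private lemma abs_prod_pow_sub_prod_pow_le {ι : Type*} (s : Finset ι) (a b : ι → ℝ) (n : ι → ℕ)
    {B δ : ℝ} (hB : 1 ≤ B) (hδ : 0 ≤ δ) (ha : ∀ i ∈ s, |a i| ≤ B) (hb : ∀ i ∈ s, |b i| ≤ B)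
    (hab : ∀ i ∈ s, |a i - b i| ≤ δ) :
    |∏ i ∈ s, a i ^ n i - ∏ i ∈ s, b i ^ n i| ≤ (∑ i ∈ s, n i) * B ^ (∑ i ∈ s, n i) * δ := by
  classical
  revert ha hb hab
  refine Finset.induction_on s ?_ ?_
  · intro _ _ _; simp [hδ]
  · intro i s hi ih ha hb hab
    have has : ∀ j ∈ s, |a j| ≤ B := fun j hj => ha j (Finset.mem_insert_of_mem hj)
    have hbs : ∀ j ∈ s, |b j| ≤ B := fun j hj => hb j (Finset.mem_insert_of_mem hj)
    have habs : ∀ j ∈ s, |a j - b j| ≤ δ := fun j hj => hab j (Finset.mem_insert_of_mem hj)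
    have hai : |a i| ≤ B := ha i (Finset.mem_insert_self i s)
    have hbi : |b i| ≤ B := hb i (Finset.mem_insert_self i s)
    have habi : |a i - b i| ≤ δ := hab i (Finset.mem_insert_self i s)
    rw [Finset.prod_insert hi, Finset.prod_insert hi, Finset.sum_insert hi]
    have key : a i ^ n i * ∏ j ∈ s, a j ^ n j - b i ^ n i * ∏ j ∈ s, b j ^ n j
        = (a i ^ n i - b i ^ n i) * ∏ j ∈ s, a j ^ n j
          + b i ^ n i * (∏ j ∈ s, a j ^ n j - ∏ j ∈ s, b j ^ n j) := by ring
    rw [key]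
    calc |(a i ^ n i - b i ^ n i) * ∏ j ∈ s, a j ^ n j
          + b i ^ n i * (∏ j ∈ s, a j ^ n j - ∏ j ∈ s, b j ^ n j)|
        ≤ |(a i ^ n i - b i ^ n i) * ∏ j ∈ s, a j ^ n j|
          + |b i ^ n i * (∏ j ∈ s, a j ^ n j - ∏ j ∈ s, b j ^ n j)| := abs_add_le _ _
      _ ≤ (n i * B ^ n i * δ) * B ^ (∑ j ∈ s, n j)
          + B ^ n i * ((∑ j ∈ s, n j) * B ^ (∑ j ∈ s, n j) * δ) := by
          rw [abs_mul, abs_mul]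
          refine add_le_add (mul_le_mul (abs_pow_sub_pow_le' _ hai hbi habi hB)
            (abs_prod_pow_le s a n hB has) (abs_nonneg _) (by positivity)) ?_
          refine mul_le_mul ?_ (ih has hbs habs) (abs_nonneg _) (by positivity)
          rw [abs_pow]; exact pow_le_pow_left₀ (abs_nonneg _) hbi _
      _ = (↑(n i + ∑ j ∈ s, n j)) * B ^ (n i + ∑ j ∈ s, n j) * δ := by
          rw [pow_add]; push_cast; ring

/-- If `P ∈ ℤ[X₁,…,X_k]` has absolute degree `r`, `V` is its real zero set,
`T = V ∩ ℚ^k`, `ψ(t) = o(t^{-r+1})` as `t → ∞`, `ζ ∈ V`, and for arbitrarily large integers `x`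
there are integers `y₁,…,y_k` with `max_j |x ζ_j − y_j| ≤ ψ(x)`, then `ζ` lies in the
topological closure of `T`. -/
theorem approx_on_variety_mem_closure (k r : ℕ) (P : MvPolynomial (Fin k) ℤ)
    (hdeg : P.totalDegree = r)
    (V : Set (Fin k → ℝ))
    (hV : V = {z : Fin k → ℝ |
        MvPolynomial.eval z (MvPolynomial.map (Int.castRingHom ℝ) P) = 0})
    (T : Set (Fin k → ℝ))
    (hT : T = {z ∈ V | ∀ j, ∃ q : ℚ, (q : ℝ) = z j})
    (ψ : ℝ → ℝ)
    (hψ : ψ =o[atTop] fun t : ℝ => t ^ (-(r : ℝ) + 1))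
    (ζ : Fin k → ℝ) (hζ : ζ ∈ V)
    (happrox : ∀ N : ℕ, ∃ x : ℕ, N ≤ x ∧ ∃ y : Fin k → ℤ,
        ∀ j, |(x : ℝ) * ζ j - (y j : ℝ)| ≤ ψ (x : ℝ)) :
    ζ ∈ closure T := by
  rw [Metric.mem_closure_iff]
  intro ε hε
  -- Setup constants
  set B : ℝ := 1 + ∑ j, |ζ j| with hBdef
  have hB : 1 ≤ B := le_add_of_nonneg_right (Finset.sum_nonneg fun j _ => abs_nonneg _)
  have hζB : ∀ j, |ζ j| ≤ B := by
    intro j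
    have : |ζ j| ≤ ∑ j, |ζ j| :=
      Finset.single_le_sum (fun j _ => abs_nonneg (ζ j)) (Finset.mem_univ j)
    linarith
  set C : ℝ := ∑ m ∈ P.support, |((P.coeff m : ℤ) : ℝ)| with hCdef
  have hC : 0 ≤ C := Finset.sum_nonneg fun m _ => abs_nonneg _
  set K : ℝ := C * r * B ^ r with hKdef
  have hK : 0 ≤ K := by positivity
  set c : ℝ := min (ε / 2) (1 / (K + 1)) with hcdef
  have hc : 0 < c := lt_min (by linarith) (by positivity)
  have hc1 : c ≤ 1 := le_trans (min_le_right _ _) (by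
    rw [div_le_one (by linarith)]; linarith)
  -- from littleO, eventual bound
  have hev : ∀ᶠ t in atTop, ‖ψ t‖ ≤ c * ‖t ^ (-(r : ℝ) + 1)‖ := hψ.def hc
  rw [eventually_atTop] at hev
  obtain ⟨M, hM⟩ := hev
  -- choose x
  obtain ⟨x, hxN, y, hy⟩ := happrox (max 1 ⌈M⌉₊)
  have hx1 : 1 ≤ x := le_trans (le_max_left _ _) hxN
  have hxM : M ≤ (x : ℝ) := by
    calc M ≤ (⌈M⌉₊ : ℝ) := Nat.le_ceil M
      _ ≤ (x : ℝ) := by exact_mod_cast le_trans (le_max_right _ _) hxN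
  have hx0 : (0 : ℝ) < x := by exact_mod_cast hx1
  have hx1' : (1 : ℝ) ≤ x := by exact_mod_cast hx1
  have hψx : |ψ (x : ℝ)| ≤ c * (x : ℝ) ^ (-(r : ℝ) + 1) := by
    have := hM (x : ℝ) hxM
    rwa [Real.norm_eq_abs, Real.norm_eq_abs,
      abs_of_pos (Real.rpow_pos_of_pos hx0 _)] at this
  have hrpow_le : (x : ℝ) ^ (-(r : ℝ) + 1) ≤ (x : ℝ) := by
    calc (x : ℝ) ^ (-(r : ℝ) + 1) ≤ (x : ℝ) ^ (1 : ℝ) :=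
        Real.rpow_le_rpow_of_exponent_le hx1' (by
          have : (0 : ℝ) ≤ r := Nat.cast_nonneg r
          linarith)
      _ = (x : ℝ) := Real.rpow_one _
  -- the candidate rational point
  set z : Fin k → ℝ := fun j => (y j : ℝ) / x with hzdef
  set δ : ℝ := |ψ (x : ℝ)| / x with hδdef
  have hδ0 : 0 ≤ δ := by positivity
  have hδc : δ ≤ c := by
    rw [hδdef, div_le_iff₀ hx0]
    calc |ψ (x : ℝ)| ≤ c * (x : ℝ) ^ (-(r : ℝ) + 1) := hψx
      _ ≤ c * x := by
          exact mul_le_mul_of_nonneg_left hrpow_le (le_of_lt hc)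
  have hzζ : ∀ j, |z j - ζ j| ≤ δ := by
    intro j
    have : z j - ζ j = -((x : ℝ) * ζ j - y j) / x := by
      simp only [hzdef]; rw [neg_sub, sub_div, mul_div_cancel_left₀ _ hx0.ne']
    rw [this, abs_div, abs_neg, abs_of_pos hx0, hδdef]
    exact (div_le_div_iff_of_pos_right hx0).mpr (le_trans (hy j) (le_abs_self _))
  have hzB : ∀ j, |z j| ≤ B := by
    intro j
    calc |z j| = |z j - ζ j + ζ j| := by ring_nf
      _ ≤ |z j - ζ j| + |ζ j| := abs_add_le _ _
      _ ≤ δ + |ζ j| := add_le_add_left (hzζ j) _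
      _ ≤ 1 + ∑ j, |ζ j| := by
          have h1 : δ ≤ 1 := le_trans hδc hc1
          have h2 : |ζ j| ≤ ∑ j, |ζ j| :=
            Finset.single_le_sum (fun j _ => abs_nonneg (ζ j)) (Finset.mem_univ j)
          linarith
  -- degree of each monomial
  have hDm : ∀ m ∈ P.support, (∑ j, m j) ≤ r := by
    intro m hm
    have h1 := MvPolynomial.le_totalDegree hm
    rw [hdeg] at h1
    rwa [Finsupp.sum_fintype _ _ (fun _ => rfl)] at h1
  -- the integer
  set N : ℤ := ∑ m ∈ P.support, P.coeff m * (x : ℤ) ^ (r - ∑ j, m j) * ∏ j, (y j) ^ (m j)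
    with hNdef
  -- evaluation formulas
  have heval : ∀ w : Fin k → ℝ,
      MvPolynomial.eval w (MvPolynomial.map (Int.castRingHom ℝ) P)
        = ∑ m ∈ P.support, ((P.coeff m : ℤ) : ℝ) * ∏ j, (w j) ^ (m j) := by
    intro w
    rw [← MvPolynomial.eval₂_eq_eval_map, MvPolynomial.eval₂_eq']
    rfl
  -- key identity
  have hNid : (N : ℝ) = (x : ℝ) ^ r *
      MvPolynomial.eval z (MvPolynomial.map (Int.castRingHom ℝ) P) := by
    rw [heval, Finset.mul_sum, hNdef]
    push_cast
    refine Finset.sum_congr rfl fun m hm => ?_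
    have hD : (∑ j, m j) ≤ r := hDm m hm
    have hprod : ∏ j, (z j) ^ (m j) = (∏ j, (y j : ℝ) ^ (m j)) / (x : ℝ) ^ (∑ j, m j) := by
      rw [hzdef]
      simp only [div_pow]
      rw [Finset.prod_div_distrib, Finset.prod_pow_eq_pow_sum]
    rw [hprod]
    have hxr : (x : ℝ) ^ r = (x : ℝ) ^ (r - ∑ j, m j) * (x : ℝ) ^ (∑ j, m j) := by
      rw [← pow_add, Nat.sub_add_cancel hD]
    rw [hxr]
    have hxD : ((x : ℝ) ^ (∑ j, m j)) ≠ 0 := by positivity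
    field_simp
  -- eval at ζ is 0
  have hζ0 : MvPolynomial.eval ζ (MvPolynomial.map (Int.castRingHom ℝ) P) = 0 := by
    rw [hV] at hζ; exact hζ
  -- bound on N
  have hxrδ : (x : ℝ) ^ r * δ ≤ c := by
    have hx_rpow : (x : ℝ) ^ r = (x : ℝ) ^ (r : ℝ) := (Real.rpow_natCast _ r).symm
    calc (x : ℝ) ^ r * δ
        ≤ (x : ℝ) ^ r * ((c * (x : ℝ) ^ (-(r : ℝ) + 1)) / x) := by
          refine mul_le_mul_of_nonneg_left ?_ (by positivity)
          rw [hδdef]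
          exact (div_le_div_iff_of_pos_right hx0).mpr hψx
      _ = c * ((x : ℝ) ^ (r : ℝ) * (x : ℝ) ^ (-(r : ℝ) + 1) / x) := by
          rw [hx_rpow]; ring
      _ = c := by
          rw [← Real.rpow_add hx0]
          have : (r : ℝ) + (-(r : ℝ) + 1) = 1 := by ring
          rw [this, Real.rpow_one, div_self (ne_of_gt hx0), mul_one]
  have hNbound : |(N : ℝ)| ≤ K * c := by
    have hNdiff : (N : ℝ) = (x : ℝ) ^ r *
        ∑ m ∈ P.support, ((P.coeff m : ℤ) : ℝ) * (∏ j, (z j) ^ (m j) - ∏ j, (ζ j) ^ (m j)) := by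
      rw [hNid]
      have := heval ζ
      rw [hζ0] at this
      rw [heval z]
      have h0 : (0 : ℝ) = ∑ m ∈ P.support, ((P.coeff m : ℤ) : ℝ) * ∏ j, (ζ j) ^ (m j) := this
      calc (x : ℝ) ^ r * ∑ m ∈ P.support, ((P.coeff m : ℤ) : ℝ) * ∏ j, (z j) ^ (m j)
          = (x : ℝ) ^ r * ((∑ m ∈ P.support, ((P.coeff m : ℤ) : ℝ) * ∏ j, (z j) ^ (m j))
            - ∑ m ∈ P.support, ((P.coeff m : ℤ) : ℝ) * ∏ j, (ζ j) ^ (m j)) := by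
            rw [← h0]; ring
        _ = (x : ℝ) ^ r * ∑ m ∈ P.support,
              ((P.coeff m : ℤ) : ℝ) * (∏ j, (z j) ^ (m j) - ∏ j, (ζ j) ^ (m j)) := by
            rw [← Finset.sum_sub_distrib]
            congr 1
            exact Finset.sum_congr rfl fun m _ => by ring
    rw [hNdiff, abs_mul, abs_pow, abs_of_pos hx0]
    calc (x : ℝ) ^ r * |∑ m ∈ P.support,
          ((P.coeff m : ℤ) : ℝ) * (∏ j, (z j) ^ (m j) - ∏ j, (ζ j) ^ (m j))|
        ≤ (x : ℝ) ^ r * ∑ m ∈ P.support, |((P.coeff m : ℤ) : ℝ)| * (r * B ^ r * δ) := by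
          refine mul_le_mul_of_nonneg_left ?_ (by positivity)
          refine le_trans (Finset.abs_sum_le_sum_abs _ _) (Finset.sum_le_sum fun m hm => ?_)
          rw [abs_mul]
          refine mul_le_mul_of_nonneg_left ?_ (abs_nonneg _)
          calc |∏ j, (z j) ^ (m j) - ∏ j, (ζ j) ^ (m j)|
              ≤ (∑ j, m j) * B ^ (∑ j, m j) * δ :=
                abs_prod_pow_sub_prod_pow_le Finset.univ z ζ m hB hδ0
                  (fun j _ => hzB j) (fun j _ => hζB j) (fun j _ => hzζ j)
            _ ≤ r * B ^ r * δ := by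
                refine mul_le_mul_of_nonneg_right ?_ hδ0
                refine mul_le_mul ?_ (pow_le_pow_right₀ hB (hDm m hm)) (by positivity)
                  (Nat.cast_nonneg r)
                exact_mod_cast Nat.cast_le.mpr (hDm m hm)
      _ = K * ((x : ℝ) ^ r * δ) := by
          rw [← Finset.sum_mul, hKdef, hCdef]; ring
      _ ≤ K * c := mul_le_mul_of_nonneg_left hxrδ hK
  -- N = 0
  have hKc1 : K * c < 1 := by
    have h1 : K * c ≤ K * (1 / (K + 1)) :=
      mul_le_mul_of_nonneg_left (min_le_right _ _) hK
    have h2 : K * (1 / (K + 1)) < 1 := by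
      rw [mul_one_div, div_lt_one (by linarith)]; linarith
    linarith
  have hN0 : N = 0 := by
    have h1 : |(N : ℝ)| < 1 := lt_of_le_of_lt hNbound hKc1
    have h2 : |N| < 1 := by exact_mod_cast (by rwa [← Int.cast_abs] at h1 : ((|N| : ℤ) : ℝ) < 1)
    rw [abs_lt] at h2
    omega
  -- z is a zero
  have hzV : MvPolynomial.eval z (MvPolynomial.map (Int.castRingHom ℝ) P) = 0 := by
    have h := hNid
    rw [hN0, Int.cast_zero] at h
    have hxr : ((x : ℝ) ^ r) ≠ 0 := by positivity
    exact (mul_eq_zero.mp h.symm).resolve_left hxr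
  -- z ∈ T
  have hzT : z ∈ T := by
    rw [hT]
    refine ⟨by rw [hV]; exact hzV, fun j => ⟨(y j : ℚ) / (x : ℚ), by push_cast; rfl⟩⟩
  refine ⟨z, hzT, ?_⟩
  rw [dist_pi_lt_iff hε]
  intro j
  rw [Real.dist_eq, abs_sub_comm]
  calc |z j - ζ j| ≤ δ := hzζ j
    _ ≤ c := hδc
    _ ≤ ε / 2 := min_le_left _ _
    _ < ε := by linarith
end

section
/- For every integer k ≥ 1 and every ζ ∈ ℝ^k, ω_k(ζ) ≥ (χ_k(ζ) − k + 1)/k. -/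
open Filter

/-- distance from a real number to the nearest integer -/
noncomputable def distNearestInt (t : ℝ) : ℝ := |t - round t|

/-- exponents `ν` admissible for the classical simultaneous approximation exponent `ω_k` -/
def omegaSet (k : ℕ) (ζ : Fin k → ℝ) : Set ℝ :=
  {ν | ∀ N : ℕ, ∃ x : ℕ, N ≤ x ∧ 0 < x ∧
      ∀ j, distNearestInt ((x : ℝ) * ζ j) ≤ (x : ℝ) ^ (-ν)}

/-- the classical exponent `ω_k` of simultaneous rational approximation -/
noncomputable def omegaExp (k : ℕ) (ζ : Fin k → ℝ) : EReal :=
  sSup ((fun ν : ℝ => (ν : EReal)) '' omegaSet k ζ)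

/-- exponents `ν` admissible for the multi-denominator exponent `χ_k` -/
def chiSet (k : ℕ) (ζ : Fin k → ℝ) : Set ℝ :=
  {ν | ∀ X₀ : ℝ, ∃ X : ℝ, X₀ ≤ X ∧ ∃ x : Fin k → ℤ,
      (∀ j, x j ≠ 0) ∧ (∀ j, (|x j| : ℝ) ≤ X) ∧
      ∀ j, distNearestInt ((x j : ℝ) * ζ j) ≤ X ^ (-ν)}

/-- the multi-denominator exponent `χ_k` of simultaneous approximation -/
noncomputable def chiExp (k : ℕ) (ζ : Fin k → ℝ) : EReal :=
  sSup ((fun ν : ℝ => (ν : EReal)) '' chiSet k ζ)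

/-- exponents `μ` admissible for the one-dimensional exponent `λ₁` -/
def lambda1Set (ζ : ℝ) : Set ℝ :=
  {μ | ∀ N : ℕ, ∃ q : ℕ, N ≤ q ∧ 0 < q ∧
      distNearestInt ((q : ℝ) * ζ) ≤ (q : ℝ) ^ (-μ)}

/-- the classical one-dimensional irrationality exponent `λ₁` -/
noncomputable def lambda1Exp (ζ : ℝ) : EReal :=
  sSup ((fun μ : ℝ => (μ : EReal)) '' lambda1Set ζ)


lemma dNI_nonneg (t : ℝ) : 0 ≤ distNearestInt t := abs_nonneg _

lemma dNI_le_half (t : ℝ) : distNearestInt t ≤ 1/2 := abs_sub_round t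

lemma dNI_neg_le (t : ℝ) : distNearestInt (-t) ≤ distNearestInt t := by
  unfold distNearestInt
  calc |(-t) - round (-t)| ≤ |(-t) - ((-round t : ℤ):ℝ)| := round_le _ _
  _ = |t - round t| := by push_cast; rw [show -t - -(round t:ℝ) = -(t - round t) by ring, abs_neg]

lemma dNI_neg (t : ℝ) : distNearestInt (-t) = distNearestInt t :=
  le_antisymm (dNI_neg_le t) (by simpa using dNI_neg_le (-t))

lemma dNI_int_mul (m : ℤ) (t : ℝ) :
    distNearestInt ((m:ℝ) * t) ≤ |(m:ℝ)| * distNearestInt t := by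
  unfold distNearestInt
  calc |(m:ℝ)*t - round ((m:ℝ)*t)| ≤ |(m:ℝ)*t - ((m * round t : ℤ):ℝ)| := round_le _ _
  _ = |(m:ℝ)| * |t - round t| := by push_cast; rw [← abs_mul]; ring_nf

lemma dNI_nat_mul (m : ℕ) (t : ℝ) :
    distNearestInt ((m:ℝ) * t) ≤ (m:ℝ) * distNearestInt t := by
  simpa using dNI_int_mul (m:ℤ) t

lemma zero_mem_omegaSet (k : ℕ) (ζ : Fin k → ℝ) : (0:ℝ) ∈ omegaSet k ζ := by
  intro N
  refine ⟨N + 1, by omega, by omega, fun j => ?_⟩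
  rw [neg_zero, Real.rpow_zero]
  exact (dNI_le_half _).trans (by norm_num)

lemma memB (k : ℕ) (hk : 1 ≤ k) (ζ : Fin k → ℝ) {ν : ℝ} (hν : ν ∈ chiSet k ζ) :
    (ν - k + 1)/k ∈ omegaSet k ζ := by
  have hkR : (0:ℝ) < k := by exact_mod_cast hk
  set μ : ℝ := (ν - k + 1)/k with hμdef
  rcases le_or_gt μ 0 with hμ | hμ
  · -- trivial case
    intro N
    refine ⟨N + 1, by omega, by omega, fun j => ?_⟩
    have h1 : (1:ℝ) ≤ ((N+1:ℕ):ℝ) := by exact_mod_cast Nat.one_le_iff_ne_zero.2 (by omega)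
    have : (1:ℝ) ≤ ((N+1:ℕ):ℝ) ^ (-μ) := Real.one_le_rpow h1 (by linarith)
    exact (dNI_le_half _).trans (by linarith)
  by_cases htor : ∃ q : ℕ, 0 < q ∧ ∀ j, distNearestInt ((q:ℝ) * ζ j) = 0
  · -- torsion case
    obtain ⟨q, hq, hq0⟩ := htor
    intro N
    refine ⟨q * (N + 1), ?_, by positivity, fun j => ?_⟩
    · calc N ≤ N + 1 := by omega
        _ ≤ q * (N+1) := Nat.le_mul_of_pos_left _ hq
    · have h0 : (q:ℝ) * ζ j = ((round ((q:ℝ) * ζ j) : ℤ) : ℝ) := by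
        have := hq0 j
        unfold distNearestInt at this
        have := abs_eq_zero.1 this
        linarith
      have heq : ((q * (N+1) : ℕ):ℝ) * ζ j = (((N+1 : ℤ) * round ((q:ℝ) * ζ j) : ℤ) : ℝ) :=
        calc ((q * (N+1) : ℕ):ℝ) * ζ j = ((N:ℝ)+1) * ((q:ℝ) * ζ j) := by push_cast; ring
          _ = (((N+1 : ℤ) * round ((q:ℝ) * ζ j) : ℤ) : ℝ) := by
            rw [h0]; push_cast [round_intCast]; ring
      rw [heq]
      unfold distNearestInt
      rw [round_intCast, sub_self, abs_zero]
      positivity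
  · -- main case
    push_neg at htor
    intro N
    set M := max N 1 with hM
    have hMne : (Finset.Icc 1 M).Nonempty := ⟨1, by simp [hM]⟩
    have hkne : (Finset.univ : Finset (Fin k)).Nonempty := by
      have : NeZero k := ⟨by omega⟩
      exact Finset.univ_nonempty
    have key : ∃ ε : ℝ, 0 < ε ∧ ∀ q' : ℕ, 1 ≤ q' → q' ≤ M →
        ∃ j, ε ≤ distNearestInt ((q':ℝ) * ζ j) := by
      refine ⟨(Finset.Icc 1 M).inf' hMne
        (fun q' => Finset.univ.sup' hkne (fun j => distNearestInt ((q':ℝ) * ζ j))), ?_, ?_⟩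
      · rw [Finset.lt_inf'_iff]
        intro q' hq'
        rw [Finset.mem_Icc] at hq'
        obtain ⟨j, hj⟩ := htor q' hq'.1
        rw [Finset.lt_sup'_iff]
        exact ⟨j, Finset.mem_univ j, lt_of_le_of_ne (dNI_nonneg _) (Ne.symm hj)⟩
      · intro q' h1 h2
        have hle := Finset.inf'_le (s := Finset.Icc 1 M)
          (fun q' : ℕ => Finset.univ.sup' hkne (fun j => distNearestInt ((q':ℝ) * ζ j)))
          (Finset.mem_Icc.2 ⟨h1, h2⟩)
        obtain ⟨j, _, hj⟩ := Finset.exists_mem_eq_sup' hkne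
          (fun j => distNearestInt ((q':ℝ) * ζ j))
        exact ⟨j, by rw [hj] at hle; exact hle⟩
    obtain ⟨ε, hεpos, hεkey⟩ := key
    have hkμ : (k:ℝ) * μ = ν - k + 1 := by
      rw [hμdef]; field_simp
    have hkμpos : 0 < (k:ℝ) * μ := mul_pos hkR hμ
    obtain ⟨X, hXX₀, x, hx0, hxle, hxd⟩ := hν (max 1 ((1/ε) ^ ((k*μ : ℝ))⁻¹ + 1))
    have hX1 : (1:ℝ) ≤ X := le_trans (le_max_left _ _) hXX₀
    have hX0 : (0:ℝ) < X := by linarith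
    have hXbig : X ^ (-((k:ℝ)*μ)) < ε := by
      have h1 : (1/ε) ^ ((k*μ : ℝ))⁻¹ < X := by
        have := le_trans (le_max_right 1 ((1/ε) ^ ((k*μ : ℝ))⁻¹ + 1)) hXX₀
        linarith
      have h2 : (1/ε) < X ^ ((k:ℝ)*μ) := by
        have h3 := Real.rpow_lt_rpow (Real.rpow_nonneg (by positivity) _) h1 hkμpos
        rwa [← Real.rpow_mul (by positivity), inv_mul_cancel₀ (ne_of_gt hkμpos),
          Real.rpow_one] at h3
      rw [Real.rpow_neg hX0.le]
      have hXp : 0 < X ^ ((k:ℝ)*μ) := Real.rpow_pos_of_pos hX0 _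
      rw [inv_lt_comm₀ hXp hεpos]
      rwa [one_div] at h2
    set q : ℕ := ∏ j, (x j).natAbs with hqdef
    have hq0 : 0 < q := Finset.prod_pos (fun j _ => Int.natAbs_pos.2 (hx0 j))
    have hcast : ∀ (s : Finset (Fin k)), ((∏ j ∈ s, (x j).natAbs : ℕ) : ℝ) = ∏ j ∈ s, |((x j : ℝ))| := by
      intro s
      push_cast [Nat.cast_natAbs]
      rfl
    have hqX : (q:ℝ) ≤ X ^ ((k:ℝ)) := by
      rw [hqdef, hcast]
      have h := Finset.prod_le_prod (s := Finset.univ)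
        (f := fun j => |((x j : ℝ))|) (g := fun _ => X)
        (fun i _ => abs_nonneg _) (fun i _ => hxle i)
      rw [Finset.prod_const, Finset.card_univ, Fintype.card_fin] at h
      rwa [Real.rpow_natCast]
    have hd : ∀ j, distNearestInt ((q:ℝ) * ζ j) ≤ X ^ (-((k:ℝ)*μ)) := by
      intro j
      have hsplit : q = (∏ i ∈ Finset.univ.erase j, (x i).natAbs) * (x j).natAbs := by
        rw [hqdef, Finset.prod_erase_mul _ _ (Finset.mem_univ j)]
      set c : ℕ := ∏ i ∈ Finset.univ.erase j, (x i).natAbs with hc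
      have hqc : (q:ℝ) * ζ j = (c:ℝ) * (|((x j : ℝ))| * ζ j) := by
        rw [hsplit]
        push_cast [Nat.cast_natAbs]
        ring
      have hdabs : distNearestInt (|((x j : ℝ))| * ζ j) = distNearestInt (((x j : ℝ)) * ζ j) := by
        rcases abs_choice ((x j : ℝ)) with h | h
        · rw [h]
        · rw [h, neg_mul, dNI_neg]
      have step1 : distNearestInt ((q:ℝ) * ζ j) ≤ (c:ℝ) * distNearestInt (((x j:ℝ)) * ζ j) := by
        rw [hqc, ← hdabs]
        exact dNI_nat_mul c _
      have hcX : (c:ℝ) ≤ X ^ ((k:ℝ) - 1) := by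
        rw [hc, hcast]
        have h := Finset.prod_le_prod (s := Finset.univ.erase j)
          (f := fun i => |((x i : ℝ))|) (g := fun _ => X)
          (fun i _ => abs_nonneg _) (fun i _ => hxle i)
        rw [Finset.prod_const, Finset.card_erase_of_mem (Finset.mem_univ j),
          Finset.card_univ, Fintype.card_fin] at h
        have hcast2 : ((k - 1 : ℕ) : ℝ) = (k:ℝ) - 1 := by
          push_cast [Nat.cast_sub hk]; ring
        rwa [← hcast2, Real.rpow_natCast]

      calc distNearestInt ((q:ℝ) * ζ j)
          ≤ (c:ℝ) * distNearestInt (((x j:ℝ)) * ζ j) := step1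
        _ ≤ X ^ ((k:ℝ) - 1) * (X ^ (-ν)) := by
            apply mul_le_mul hcX (hxd j) (dNI_nonneg _)
            positivity
        _ = X ^ (-((k:ℝ)*μ)) := by
            rw [← Real.rpow_add hX0]
            congr 1
            rw [hkμ]; ring
    have hqM : M < q := by
      by_contra hqM
      push_neg at hqM
      obtain ⟨j₀, hj₀⟩ := hεkey q hq0 hqM
      exact absurd (lt_of_le_of_lt (hj₀.trans (hd j₀)) hXbig) (lt_irrefl ε)
    refine ⟨q, le_trans (le_max_left N 1) hqM.le, hq0, fun j => ?_⟩
    calc distNearestInt ((q:ℝ) * ζ j) ≤ X ^ (-((k:ℝ)*μ)) := hd j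
      _ ≤ (q:ℝ) ^ (-μ) := by
          rw [Real.rpow_neg hX0.le, Real.rpow_neg (Nat.cast_nonneg q)]
          apply inv_anti₀ (Real.rpow_pos_of_pos (by exact_mod_cast hq0) _)
          calc (q:ℝ) ^ μ ≤ (X ^ ((k:ℝ))) ^ μ :=
              Real.rpow_le_rpow (Nat.cast_nonneg q) hqX hμ.le
            _ = X ^ ((k:ℝ)*μ) := by rw [← Real.rpow_mul hX0.le]

/-- For every integer `k ≥ 1` and every `ζ ∈ ℝ^k`,
`ω_k(ζ) ≥ (χ_k(ζ) − k + 1)/k`. -/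
theorem omegaExp_ge (k : ℕ) (hk : 1 ≤ k) (ζ : Fin k → ℝ) :
    (chiExp k ζ - (k : EReal) + 1) / (k : EReal) ≤ omegaExp k ζ := by
  have hkR : (0:ℝ) < k := by exact_mod_cast hk
  by_cases hT : omegaExp k ζ = ⊤
  · rw [hT]; exact le_top
  have h0 : (0:EReal) ≤ omegaExp k ζ := by
    rw [show (0:EReal) = ((0:ℝ):EReal) by norm_cast]
    exact le_sSup ⟨0, zero_mem_omegaSet k ζ, rfl⟩
  have hbot : omegaExp k ζ ≠ ⊥ := fun h => by simp [h] at h0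
  set w : ℝ := (omegaExp k ζ).toReal with hw
  have hwe : omegaExp k ζ = (w:EReal) := (EReal.coe_toReal hT hbot).symm
  have hub : ∀ ν ∈ chiSet k ζ, ν ≤ w * k + ((k:ℝ) - 1) := by
    intro ν hν
    have h1 : (((ν - k + 1)/k : ℝ) : EReal) ≤ omegaExp k ζ :=
      le_sSup ⟨_, memB k hk ζ hν, rfl⟩
    rw [hwe, EReal.coe_le_coe_iff] at h1
    rw [div_le_iff₀ hkR] at h1
    linarith
  have hchi : chiExp k ζ ≤ ((w * k + ((k:ℝ) - 1) : ℝ) : EReal) := by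
    apply sSup_le
    rintro e ⟨ν, hν, rfl⟩
    exact EReal.coe_le_coe_iff.2 (hub ν hν)
  have hkE : (0:EReal) < (k : EReal) := by exact_mod_cast (show 0 < k by omega)
  rcases eq_or_ne (chiExp k ζ) ⊥ with hB | hB
  · rw [hB]
    have h1 : ((⊥:EReal) - (k : EReal) + 1) = ⊥ := by
      rw [EReal.bot_sub, EReal.bot_add]
    rw [h1, EReal.bot_div_of_pos_ne_top hkE (by exact_mod_cast EReal.natCast_ne_top k)]
    exact bot_le
  · have hTc : chiExp k ζ ≠ ⊤ := ne_top_of_le_ne_top (EReal.coe_ne_top _) hchi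
    set c : ℝ := (chiExp k ζ).toReal with hc
    have hce : chiExp k ζ = (c:EReal) := (EReal.coe_toReal hTc hB).symm
    have hcle : c ≤ w * k + ((k:ℝ) - 1) := by
      rw [hce, EReal.coe_le_coe_iff] at hchi; exact hchi
    rw [hce, hwe]
    have hkc : ((k : ℕ) : EReal) = (((k:ℝ)) : EReal) := by norm_cast
    have hcast : ((c:EReal) - (k : EReal) + 1) / (k : EReal) = (((c - k + 1)/k : ℝ) : EReal) := by
      rw [hkc, ← EReal.coe_one, ← EReal.coe_sub, ← EReal.coe_add, ← EReal.coe_div]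
    rw [hcast, EReal.coe_le_coe_iff, div_le_iff₀ hkR]
    linarith
end

section
/- Let P ∈ ℤ[X₁,…,X_k] have absolute degree r, V its real zero set, T = V ∩ ℚ^k, and ψ(X) = o(X^(−kr+1)). If ζ ∈ V and for arbitrarily large X there exist nonzero integers x₁,…,x_k and integers y₁,…,y_k with max_j |x_j| ≤ X and max_j |x_j ζ_j − y_j| ≤ ψ(X), then ζ lies in the closure of T. -/
open Filter

open Asymptotics MvPolynomial Finset

private lemma lip_aux {k : ℕ} (Q : MvPolynomial (Fin k) ℝ) (ζ : Fin k → ℝ) :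
    ∃ L : ℝ, 1 ≤ L ∧ ∀ z ∈ Metric.closedBall ζ 1,
      |MvPolynomial.eval z Q - MvPolynomial.eval ζ Q| ≤ L * dist z ζ := by
  set f : (Fin k → ℝ) → ℝ := fun z => MvPolynomial.eval z Q with hf
  have han : AnalyticOnNhd ℝ f Set.univ := AnalyticOnNhd.eval_mvPolynomial Q
  have hcd : ContDiff ℝ 1 f := han.contDiff
  have hdiff : ∀ x, DifferentiableAt ℝ f x := fun x => (han x (Set.mem_univ x)).differentiableAt
  have hcont : Continuous fun x => ‖fderiv ℝ f x‖ :=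
    (hcd.continuous_fderiv one_ne_zero).norm
  obtain ⟨C, hC⟩ := (isCompact_closedBall ζ 1).exists_bound_of_continuousOn hcont.continuousOn
  refine ⟨max C 1, le_max_right _ _, fun z hz => ?_⟩
  have := (convex_closedBall ζ 1).norm_image_sub_le_of_norm_fderiv_le (C := max C 1)
    (fun x _ => hdiff x) (fun x hx => le_trans (by simpa using hC x hx) (le_max_left _ _))
    (Metric.mem_closedBall_self zero_le_one) hz
  rwa [Real.norm_eq_abs, ← dist_eq_norm] at this
private lemma liou_aux {k r : ℕ} (P : MvPolynomial (Fin k) ℤ) (hd : P.totalDegree ≤ r)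
    (x y : Fin k → ℤ) (hx : ∀ j, x j ≠ 0)
    (hne : MvPolynomial.eval (fun j => (y j : ℝ) / (x j : ℝ))
        (MvPolynomial.map (Int.castRingHom ℝ) P) ≠ 0) :
    1 ≤ |MvPolynomial.eval (fun j => (y j : ℝ) / (x j : ℝ))
        (MvPolynomial.map (Int.castRingHom ℝ) P)| * ∏ j, (|x j| : ℝ) ^ r := by
  set z : Fin k → ℝ := fun j => (y j : ℝ) / (x j : ℝ) with hz
  have hxR : ∀ j, (x j : ℝ) ≠ 0 := fun j => Int.cast_ne_zero.mpr (hx j)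
  have hale : ∀ a ∈ P.support, ∀ j, a j ≤ r := by
    intro a ha j
    refine le_trans ?_ (le_trans (MvPolynomial.le_totalDegree ha) hd)
    rcases Nat.eq_zero_or_pos (a j) with h | h
    · omega
    · have hj : j ∈ a.support := Finsupp.mem_support_iff.mpr (by omega)
      calc a j ≤ ∑ i ∈ a.support, a i := Finset.single_le_sum (fun i _ => Nat.zero_le _) hj
        _ = a.sum fun _ e => e := rfl
  set I : ℤ := ∑ a ∈ P.support, P.coeff a * ∏ j, (y j) ^ (a j) * (x j) ^ (r - a j) with hI
  have key : (I : ℝ) = (∏ j, (x j : ℝ) ^ r) * MvPolynomial.eval z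
      (MvPolynomial.map (Int.castRingHom ℝ) P) := by
    rw [MvPolynomial.eval_map, MvPolynomial.eval₂_eq' (Int.castRingHom ℝ) z P]
    rw [Finset.mul_sum, hI]
    push_cast
    refine Finset.sum_congr rfl (fun a ha => ?_)
    rw [← mul_assoc, mul_comm (∏ j, (x j : ℝ) ^ r) _, mul_assoc, ← Finset.prod_mul_distrib]
    congr 1
    refine Finset.prod_congr rfl (fun j _ => ?_)
    rw [hz]
    rw [div_pow, pow_sub₀ _ (hxR j) (hale a ha j)]
    field_simp
  have hIne : I ≠ 0 := by
    intro h0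
    rw [h0] at key
    have hprod : (∏ j, (x j : ℝ) ^ r) ≠ 0 :=
      Finset.prod_ne_zero_iff.mpr (fun j _ => pow_ne_zero _ (hxR j))
    exact hne (by
      have : (∏ j, (x j : ℝ) ^ r) * MvPolynomial.eval z (MvPolynomial.map (Int.castRingHom ℝ) P) = 0 := by exact_mod_cast key.symm
      rcases mul_eq_zero.mp this with h | h
      · exact absurd h hprod
      · exact h)
  have h1 : (1 : ℝ) ≤ |(I : ℝ)| := by
    have : (1 : ℤ) ≤ |I| := Int.one_le_abs hIne
    exact_mod_cast this
  calc (1 : ℝ) ≤ |(I : ℝ)| := h1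
    _ = |MvPolynomial.eval z (MvPolynomial.map (Int.castRingHom ℝ) P)| * ∏ j, (|x j| : ℝ) ^ r := by
        rw [key, abs_mul, mul_comm]
        congr 1
        rw [Finset.abs_prod]
        refine Finset.prod_congr rfl (fun j _ => ?_)
        rw [abs_pow]

/-- Let `P ∈ ℤ[X₁,…,X_k]` have absolute degree `r`, `V` its real zero set,
`T = V ∩ ℚ^k`, and `ψ(X) = o(X^(−kr+1))`. If `ζ ∈ V` and for arbitrarily large `X` there are
nonzero integers `x₁,…,x_k` and integers `y₁,…,y_k` with `max_j |x_j| ≤ X` and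
`max_j |x_j ζ_j − y_j| ≤ ψ(X)`, then `ζ` lies in the closure of `T`. -/
theorem multi_denominator_approx_mem_closure (k r : ℕ) (P : MvPolynomial (Fin k) ℤ)
    (hdeg : P.totalDegree = r)
    (V : Set (Fin k → ℝ))
    (hV : V = {z : Fin k → ℝ |
        MvPolynomial.eval z (MvPolynomial.map (Int.castRingHom ℝ) P) = 0})
    (T : Set (Fin k → ℝ))
    (hT : T = {z ∈ V | ∀ j, ∃ q : ℚ, (q : ℝ) = z j})
    (ψ : ℝ → ℝ)
    (hψ : ψ =o[atTop] fun t : ℝ => t ^ (-((k * r : ℕ) : ℝ) + 1))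
    (ζ : Fin k → ℝ) (hζ : ζ ∈ V)
    (happrox : ∀ X₀ : ℝ, ∃ X : ℝ, X₀ ≤ X ∧ ∃ x y : Fin k → ℤ,
        (∀ j, x j ≠ 0) ∧ (∀ j, (|x j| : ℝ) ≤ X) ∧
        ∀ j, |(x j : ℝ) * ζ j - (y j : ℝ)| ≤ ψ X) :
    ζ ∈ closure T := by
  subst hV hT
  set Pr := MvPolynomial.map (Int.castRingHom ℝ) P with hPrdef
  rcases Nat.eq_zero_or_pos k with hk | hk
  · subst hk
    exact subset_closure ⟨hζ, fun j => j.elim0⟩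
  rcases Nat.eq_zero_or_pos r with hr | hr
  · -- degenerate: degree 0
    subst hr
    by_cases hP : P = 0
    · subst hP
      rw [Metric.mem_closure_iff]
      intro ε hε
      choose q hq using fun j => exists_rat_near (ζ j) hε
      refine ⟨fun j => (q j : ℝ), ⟨by simp [hPrdef], fun j => ⟨q j, rfl⟩⟩, ?_⟩
      rw [dist_pi_lt_iff hε]
      intro j
      rw [Real.dist_eq]
      exact hq j
    · exfalso
      have h0 := (MvPolynomial.totalDegree_eq_zero_iff (Fin k) P).mp hdeg
      have hPC : P = MvPolynomial.C (P.coeff 0) := by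
        ext a
        rw [MvPolynomial.coeff_C]
        by_cases ha : (0 : Fin k →₀ ℕ) = a
        · rw [if_pos ha, ← ha]
        · rw [if_neg ha]
          by_contra hne
          have ha' : a ∈ P.support := MvPolynomial.mem_support_iff.mpr hne
          exact ha (by ext x; exact (h0 a ha' x).symm)
      apply hP
      have : MvPolynomial.eval ζ Pr = ((P.coeff 0 : ℤ) : ℝ) := by
        rw [hPrdef, hPC, MvPolynomial.map_C, MvPolynomial.eval_C]
        rw [MvPolynomial.coeff_zero_C]; rfl
      rw [hPC]
      have hco : ((P.coeff 0 : ℤ) : ℝ) = 0 := by rw [← this]; exact hζ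
      have hc0 : P.coeff 0 = 0 := by exact_mod_cast hco
      rw [hc0, map_zero]
  -- main case : k ≥ 1, r ≥ 1
  have hkr : 1 ≤ k * r := Nat.one_le_iff_ne_zero.mpr (Nat.mul_ne_zero (by omega) (by omega))
  obtain ⟨L, hL1, hLip⟩ := lip_aux Pr ζ
  have hL0 : (0:ℝ) < L := lt_of_lt_of_le one_pos hL1
  rw [Metric.mem_closure_iff]
  intro ε hε
  set c := min (ε/2) (1/(2*L)) with hcdef
  have hc0 : 0 < c := lt_min (by linarith) (by positivity)
  obtain ⟨X₁, hX₁⟩ := eventually_atTop.mp (isLittleO_iff.mp hψ hc0)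
  obtain ⟨X, hXge, x, y, hx0, hxX, hyx⟩ := happrox (max X₁ 1)
  have hX1 : (1:ℝ) ≤ X := le_trans (le_max_right _ _) hXge
  have hX0 : (0:ℝ) < X := lt_of_lt_of_le one_pos hX1
  set A : ℝ := X ^ (-((k * r : ℕ) : ℝ) + 1) with hAdef
  have hA0 : 0 < A := Real.rpow_pos_of_pos hX0 _
  have hA1 : A ≤ 1 := Real.rpow_le_one_of_one_le_of_nonpos hX1 (by
    have h1 : (1:ℝ) ≤ ((k*r : ℕ) : ℝ) := by exact_mod_cast hkr
    linarith)
  have hψA : ψ X ≤ c * A := by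
    have hb := hX₁ X (le_trans (le_max_left _ _) hXge)
    rw [Real.norm_eq_abs, Real.norm_eq_abs, abs_of_pos hA0] at hb
    exact le_trans (le_abs_self _) hb
  have j0 : Fin k := ⟨0, hk⟩
  have hψ0 : 0 ≤ ψ X := le_trans (abs_nonneg _) (hyx j0)
  haveI : Nonempty (Fin k) := ⟨j0⟩
  set m : ℝ := Finset.univ.inf' Finset.univ_nonempty (fun j => (|x j| : ℝ)) with hmdef
  have hm1 : (1:ℝ) ≤ m := Finset.le_inf' _ _ (fun j _ => by
    exact_mod_cast Int.one_le_abs (hx0 j))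
  have hm0 : (0:ℝ) < m := lt_of_lt_of_le one_pos hm1
  obtain ⟨j₀, -, hj₀⟩ := Finset.exists_mem_eq_inf' (Finset.univ_nonempty (α := Fin k))
    (fun j => (|x j| : ℝ))
  have hmle : ∀ j, m ≤ (|x j| : ℝ) := fun j => Finset.inf'_le _ (Finset.mem_univ j)
  have hmX : m ≤ X := by rw [hmdef, hj₀]; exact hxX j₀
  set z : Fin k → ℝ := fun j => (y j : ℝ) / (x j : ℝ) with hzdef
  have hcoord : ∀ j, |z j - ζ j| ≤ ψ X / (|x j| : ℝ) := by
    intro j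
    have hxj : (x j : ℝ) ≠ 0 := Int.cast_ne_zero.mpr (hx0 j)
    have hrw : z j - ζ j = -(((x j : ℝ) * ζ j - (y j : ℝ)) / (x j : ℝ)) := by
      field_simp [hzdef]
      show ((y j : ℝ) / (x j : ℝ) - ζ j) * (x j : ℝ) = -(ζ j * (x j : ℝ) - (y j : ℝ))
      rw [sub_mul, div_mul_cancel₀ _ hxj]; ring
    rw [hrw, abs_neg, abs_div]
    gcongr
    exact hyx j
  have hdistm : dist z ζ ≤ ψ X / m := by
    rw [dist_pi_le_iff (by positivity)]
    intro j
    rw [Real.dist_eq]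
    refine le_trans (hcoord j) ?_
    gcongr
    exact hmle j
  have hdist1 : dist z ζ ≤ ψ X := le_trans hdistm (div_le_self hψ0 hm1)
  have hcA : c * A ≤ 1/(2*L) := le_trans (by nlinarith [min_le_right (ε/2) (1/(2*L))])
    (le_refl _)
  have hzball : z ∈ Metric.closedBall ζ 1 := by
    rw [Metric.mem_closedBall]
    refine le_trans hdist1 (le_trans hψA (le_trans hcA ?_))
    rw [div_le_one (by positivity)]
    linarith
  have hζ0 : MvPolynomial.eval ζ Pr = 0 := hζ
  -- the rational point is on the variety
  have hfz : MvPolynomial.eval z Pr = 0 := by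
    by_contra hne
    have hlb := liou_aux P (le_of_eq hdeg) x y hx0 hne
    have hPd0 : (0:ℝ) < ∏ j, (|x j| : ℝ) ^ r := by
      apply Finset.prod_pos
      intro j _
      have : (0:ℝ) < (|x j| : ℝ) := lt_of_lt_of_le one_pos (by
        exact_mod_cast Int.one_le_abs (hx0 j))
      positivity
    have hub : |MvPolynomial.eval z Pr| ≤ L * (ψ X / m) := by
      have h := hLip z hzball
      rw [hζ0, sub_zero] at h
      exact le_trans h (mul_le_mul_of_nonneg_left hdistm (le_of_lt hL0))
    -- bound the product of denominators
    obtain ⟨k', rfl⟩ : ∃ k', k = k' + 1 := ⟨k - 1, by omega⟩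
    obtain ⟨r', rfl⟩ : ∃ r', r = r' + 1 := ⟨r - 1, by omega⟩
    have hBle : (∏ j, (|x j| : ℝ)) ≤ m * X ^ k' := by
      rw [← Finset.mul_prod_erase Finset.univ _ (Finset.mem_univ j₀)]
      have h2 : (∏ j ∈ Finset.univ.erase j₀, (|x j| : ℝ)) ≤ X ^ k' := by
        calc (∏ j ∈ Finset.univ.erase j₀, (|x j| : ℝ))
            ≤ ∏ _j ∈ Finset.univ.erase j₀, X :=
              Finset.prod_le_prod (fun j _ => abs_nonneg _) (fun j _ => hxX j)
          _ = X ^ (Finset.univ.erase j₀).card := (Finset.prod_const X)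
          _ = X ^ k' := by
              rw [Finset.card_erase_of_mem (Finset.mem_univ j₀), Finset.card_univ,
                Fintype.card_fin]
              norm_num
      exact mul_le_mul (le_of_eq hj₀.symm) h2
        (Finset.prod_nonneg (fun j _ => abs_nonneg _)) (le_of_lt hm0)
    have hPdle : (∏ j, (|x j| : ℝ) ^ (r' + 1)) ≤ m ^ (r' + 1) * X ^ (k' * (r' + 1)) := by
      rw [Finset.prod_pow]
      calc (∏ j, (|x j| : ℝ)) ^ (r' + 1) ≤ (m * X ^ k') ^ (r' + 1) :=
            pow_le_pow_left₀ (Finset.prod_nonneg (fun j _ => abs_nonneg _)) hBle _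
        _ = m ^ (r' + 1) * X ^ (k' * (r' + 1)) := by rw [mul_pow, ← pow_mul]
    have hA_eq : A * X ^ ((k' + 1) * (r' + 1) - 1) = 1 := by
      rw [hAdef, ← Real.rpow_natCast X ((k' + 1) * (r' + 1) - 1), ← Real.rpow_add hX0]
      rw [show (-(((k' + 1) * (r' + 1) : ℕ) : ℝ) + 1) + (((k' + 1) * (r' + 1) - 1 : ℕ) : ℝ) = 0 by
        push_cast [Nat.cast_sub hkr]; ring]
      exact Real.rpow_zero X
    have hexp : (k' + 1) * (r' + 1) - 1 = k' * (r' + 1) + r' := by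
      rw [Nat.succ_mul, Nat.add_sub_assoc (by omega)]
      norm_num
    have hLc : L * c ≤ 1 / 2 := by
      have h1 : c ≤ 1 / (2 * L) := min_le_right _ _
      calc L * c ≤ L * (1 / (2 * L)) := mul_le_mul_of_nonneg_left h1 hL0.le
        _ = 1 / 2 := by
          field_simp
    have h3 : L * (c * A / m) ≤ A / (2 * m) := by
      have hAm : (0:ℝ) ≤ A / m := by positivity
      rw [show L * (c * A / m) = (L * c) * (A / m) by ring,
        show A / (2 * m) = (1 / 2) * (A / m) by ring]
      exact mul_le_mul_of_nonneg_right hLc hAm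
    have step2 : L * (ψ X / m) ≤ A / (2 * m) :=
      le_trans (mul_le_mul_of_nonneg_left ((div_le_div_iff_of_pos_right hm0).mpr hψA) hL0.le) h3
    have hEU : |MvPolynomial.eval z Pr| ≤ A / (2 * m) := le_trans hub step2
    have hmr : m ^ (r' + 1) ≤ m * X ^ r' := by
      calc m ^ (r' + 1) = m * m ^ r' := by ring
        _ ≤ m * X ^ r' := mul_le_mul_of_nonneg_left (pow_le_pow_left₀ hm0.le hmX r') hm0.le
    have hlb' : (1:ℝ) ≤ |MvPolynomial.eval z Pr| * ∏ j, (|x j| : ℝ) ^ (r' + 1) := hlb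
    have hfinal : (1:ℝ) ≤ 1 / 2 := by
      calc (1:ℝ) ≤ |MvPolynomial.eval z Pr| * ∏ j, (|x j| : ℝ) ^ (r' + 1) := hlb'
        _ ≤ (A / (2 * m)) * ∏ j, (|x j| : ℝ) ^ (r' + 1) :=
            mul_le_mul_of_nonneg_right hEU hPd0.le
        _ ≤ (A / (2 * m)) * (m ^ (r' + 1) * X ^ (k' * (r' + 1))) :=
            mul_le_mul_of_nonneg_left hPdle (by positivity)
        _ ≤ (A / (2 * m)) * (m * X ^ r' * X ^ (k' * (r' + 1))) := by
            apply mul_le_mul_of_nonneg_left _ (by positivity)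
            exact mul_le_mul_of_nonneg_right hmr (by positivity)
        _ = (A * X ^ ((k' + 1) * (r' + 1) - 1)) / 2 := by
            rw [hexp, pow_add]
            field_simp
        _ = 1 / 2 := by rw [hA_eq]
    linarith
  refine ⟨z, ⟨hfz, fun j => ⟨(y j : ℚ) / (x j : ℚ), (by push_cast [hzdef]; ring)⟩⟩, ?_⟩
  rw [dist_comm ζ z]
  refine lt_of_le_of_lt (le_trans hdist1 hψA) ?_
  calc c * A ≤ c * 1 := by nlinarith
    _ = c := mul_one c
    _ ≤ ε / 2 := min_le_left _ _
    _ < ε := by linarith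
end

section
/- Let ζ be irrational with convergents r_n/s_n satisfying −log|s_n ζ − r_n| / log s_n → k·λ + k − 1 as n → ∞, for some real λ > 1 and integer k ≥ 1. Then for each 1 ≤ j ≤ k, |s_n^j ζ^j − r_n^j| = s_n^{−(kλ+k−j)+o(1)}, i.e., −log|s_n^j ζ^j − r_n^j| / log(s_n^j) → (kλ + k − j)/j as n → ∞; in particular, for sufficiently large n, r_n^j / s_n^j is a convergent of ζ^j. -/
open Filter

open GenContFract in
private lemma contsAux_int (v : ℝ) : ∀ n : ℕ,
    (∃ za : ℤ, ((GenContFract.of v).contsAux n).a = za) ∧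
    (∃ zb : ℤ, ((GenContFract.of v).contsAux n).b = zb) := by
  intro n
  induction n using Nat.twoStepInduction with
  | zero => exact ⟨⟨1, by simp [contsAux]⟩, ⟨0, by simp [contsAux]⟩⟩
  | one => exact ⟨⟨⌊v⌋, by simp [contsAux, of_h_eq_floor]⟩, ⟨1, by simp [contsAux]⟩⟩
  | more n ih ih1 =>
    obtain ⟨⟨a0, ha0⟩, ⟨b0, hb0⟩⟩ := ih
    obtain ⟨⟨a1, ha1⟩, ⟨b1, hb1⟩⟩ := ih1
    cases hsg : (GenContFract.of v).s.get? n with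
    | none =>
      have heq : (GenContFract.of v).contsAux (n + 2) = (GenContFract.of v).contsAux (n + 1) := by
        simp [contsAux, hsg]
      rw [heq]
      exact ⟨⟨a1, ha1⟩, ⟨b1, hb1⟩⟩
    | some gp =>
      obtain ⟨hga, z, hgb⟩ := of_partNum_eq_one_and_exists_int_partDen_eq hsg
      have heq : (GenContFract.of v).contsAux (n + 2) =
          ⟨gp.b * ((GenContFract.of v).contsAux (n + 1)).a + gp.a * ((GenContFract.of v).contsAux n).a,
           gp.b * ((GenContFract.of v).contsAux (n + 1)).b + gp.a * ((GenContFract.of v).contsAux n).b⟩ := by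
        simp [contsAux, hsg, nextConts, nextNum, nextDen]
      rw [heq]
      exact ⟨⟨z * a1 + a0, by rw [ha1, ha0, hga, hgb]; push_cast; ring⟩,
             ⟨z * b1 + b0, by rw [hb1, hb0, hga, hgb]; push_cast; ring⟩⟩

private lemma num_den_int (v : ℝ) (n : ℕ) :
    (∃ a : ℤ, (GenContFract.of v).nums n = a) ∧ (∃ b : ℤ, (GenContFract.of v).dens n = b) := by
  have h := contsAux_int v (n + 1)
  rwa [GenContFract.num_eq_conts_a, GenContFract.den_eq_conts_b,
    GenContFract.nth_cont_eq_succ_nth_contAux]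

/-- Let `ζ` be irrational with convergents `r_n/s_n` satisfying
`−log|s_n ζ − r_n| / log s_n → kλ + k − 1` for some real `λ > 1` and integer `k ≥ 1`. Then
for each `1 ≤ j ≤ k`, `−log|s_n^j ζ^j − r_n^j| / log(s_n^j) → (kλ + k − j)/j`, and for
sufficiently large `n` the fraction `r_n^j / s_n^j` is a convergent of `ζ^j`. -/
theorem powers_of_convergents (ζ : ℝ) (hζ : Irrational ζ) (k : ℕ) (hk : 1 ≤ k)
    (lam : ℝ) (hlam : 1 < lam)
    (r s : ℕ → ℝ)
    (hr : ∀ n, r n = (GenContFract.of ζ).nums n)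
    (hs : ∀ n, s n = (GenContFract.of ζ).dens n)
    (hlim : Tendsto (fun n => -Real.log |s n * ζ - r n| / Real.log (s n)) atTop
        (nhds ((k : ℝ) * lam + (k : ℝ) - 1))) :
    ∀ j : ℕ, 1 ≤ j → j ≤ k →
      Tendsto (fun n => -Real.log |(s n) ^ j * ζ ^ j - (r n) ^ j| / Real.log ((s n) ^ j))
          atTop (nhds (((k : ℝ) * lam + (k : ℝ) - (j : ℝ)) / (j : ℝ))) ∧
      ∃ N : ℕ, ∀ n, N ≤ n → ∃ m : ℕ,
        (GenContFract.of (ζ ^ j)).convs m = (r n) ^ j / (s n) ^ j := by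
  intro j hj1 hjk
  -- basic facts
  have hnt : ∀ n, ¬ (GenContFract.of ζ).TerminatedAt n := by
    intro n h
    have hterm : (GenContFract.of ζ).Terminates := ⟨n, h⟩
    rw [GenContFract.terminates_iff_rat] at hterm
    obtain ⟨q, hq⟩ := hterm
    exact hζ ⟨q, hq.symm⟩
  have hfib : ∀ n, ((Nat.fib (n + 1) : ℝ)) ≤ s n := by
    intro n
    rw [hs]
    exact GenContFract.succ_nth_fib_le_of_nth_den (Or.inr (hnt _))
  have hs1 : ∀ n, (1 : ℝ) ≤ s n := by
    intro n
    refine le_trans ?_ (hfib n)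
    exact_mod_cast Nat.fib_pos.mpr (Nat.succ_pos n)
  have hstop : Tendsto s atTop atTop := by
    refine tendsto_atTop_mono' atTop ?_ tendsto_natCast_atTop_atTop
    filter_upwards [eventually_ge_atTop 5] with n hn
    calc (n : ℝ) ≤ (Nat.fib n : ℝ) := by exact_mod_cast Nat.le_fib_self hn
      _ ≤ (Nat.fib (n + 1) : ℝ) := by exact_mod_cast Nat.fib_le_fib_succ
      _ ≤ s n := hfib n
  have hlogs : Tendsto (fun n => Real.log (s n)) atTop atTop :=
    Real.tendsto_log_atTop.comp hstop
  have hconv : Tendsto (fun n => r n / s n) atTop (nhds ζ) := by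
    refine (GenContFract.of_convergence ζ).congr fun n => ?_
    rw [GenContFract.conv_eq_num_div_den, hr, hs]
  have hne : ∀ n, s n * ζ - r n ≠ 0 := by
    intro n h
    obtain ⟨⟨a, ha⟩, ⟨b, hb⟩⟩ := num_den_int ζ n
    have hb1 : (1 : ℝ) ≤ (b : ℝ) := by rw [← hb, ← hs]; exact hs1 n
    have hb0 : (b : ℝ) ≠ 0 := by linarith
    apply hζ
    refine ⟨(a : ℚ) / (b : ℚ), ?_⟩
    have : ζ = r n / s n := by
      rw [eq_div_iff (by rw [hs, hb]; exact hb0)]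
      linarith [sub_eq_zero.mp h]
    rw [this, hr, hs, ha, hb]
    push_cast
    ring
  have hζ0 : ζ ≠ 0 := hζ.ne_zero
  -- the sum T
  set T : ℕ → ℝ := fun n => ∑ i ∈ Finset.range j, ζ ^ i * (r n / s n) ^ (j - 1 - i) with hT_def
  have hTlim : Tendsto T atTop (nhds ((j : ℝ) * ζ ^ (j - 1))) := by
    have hc : Continuous fun x : ℝ => ∑ i ∈ Finset.range j, ζ ^ i * x ^ (j - 1 - i) := by
      exact continuous_finset_sum _ fun i _ => continuous_const.mul (continuous_pow _)
    have := (hc.tendsto ζ).comp hconv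
    convert this using 2
    · rfl
    rw [Finset.sum_congr rfl fun i hi => ?_]
    · rw [Finset.sum_const, Finset.card_range, nsmul_eq_mul]
    · show ζ ^ i * ζ ^ (j - 1 - i) = (ζ : ℝ) ^ (j - 1)
      rw [← pow_add]
      congr 1
      have := Finset.mem_range.mp hi
      omega
  have hTlim0 : (j : ℝ) * ζ ^ (j - 1) ≠ 0 :=
    mul_ne_zero (Nat.cast_ne_zero.mpr (by omega)) (pow_ne_zero _ hζ0)
  have hTne : ∀ᶠ n in atTop, T n ≠ 0 := hTlim.eventually_ne hTlim0
  -- key factorization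
  have hkey : ∀ n, s n ≠ 0 →
      (s n) ^ j * ζ ^ j - (r n) ^ j = (s n * ζ - r n) * ((s n) ^ (j - 1) * T n) := by
    intro n hsn
    have h1 : (s n) ^ j * ζ ^ j = (s n * ζ) ^ j := (mul_pow _ _ _).symm
    rw [h1, ← geom_sum₂_mul (s n * ζ) (r n) j, mul_comm]
    congr 1
    rw [hT_def, Finset.mul_sum]
    refine Finset.sum_congr rfl fun i hi => ?_
    have hi' : i + (j - 1 - i) = j - 1 := by
      have := Finset.mem_range.mp hi; omega
    rw [mul_pow, div_pow, ← hi', pow_add]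
    have : s n ^ (j - 1 - i) ≠ 0 := pow_ne_zero _ hsn
    field_simp
    ring
    rw [Nat.add_sub_cancel_left]
  constructor
  · -- part 1: the limit
    have heq : ∀ᶠ n in atTop,
        -Real.log |(s n) ^ j * ζ ^ j - (r n) ^ j| / Real.log ((s n) ^ j) =
        ((-Real.log |s n * ζ - r n| / Real.log (s n)) - ((j : ℝ) - 1) -
          Real.log |T n| / Real.log (s n)) / (j : ℝ) := by
      filter_upwards [hstop.eventually_ge_atTop 2, hTne] with n hn2 hTn
      have hs0 : (0 : ℝ) < s n := by linarith
      have hlogpos : 0 < Real.log (s n) := Real.log_pos (by linarith)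
      have hεne : |s n * ζ - r n| ≠ 0 := abs_ne_zero.mpr (hne n)
      rw [hkey n hs0.ne', abs_mul, abs_mul, abs_pow, abs_of_pos hs0,
        Real.log_mul hεne (mul_ne_zero (pow_ne_zero _ hs0.ne') (abs_ne_zero.mpr hTn)),
        Real.log_mul (pow_ne_zero _ hs0.ne') (abs_ne_zero.mpr hTn),
        Real.log_pow, Real.log_pow, Nat.cast_sub hj1]
      have hjR : (j : ℝ) ≠ 0 := Nat.cast_ne_zero.mpr (by omega)
      push_cast
      field_simp
      ring
    have hmain : Tendsto (fun n => ((-Real.log |s n * ζ - r n| / Real.log (s n)) -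
          ((j : ℝ) - 1) - Real.log |T n| / Real.log (s n)) / (j : ℝ)) atTop
        (nhds ((((k : ℝ) * lam + (k : ℝ) - 1) - ((j : ℝ) - 1) - 0) / (j : ℝ))) := by
      refine Tendsto.div_const ?_ _
      refine Tendsto.sub (hlim.sub tendsto_const_nhds) ?_
      exact Tendsto.div_atTop (hTlim.abs.log (abs_ne_zero.mpr hTlim0)) hlogs
    have harith : (((k : ℝ) * lam + (k : ℝ) - 1) - ((j : ℝ) - 1) - 0) / (j : ℝ) =
        ((k : ℝ) * lam + (k : ℝ) - (j : ℝ)) / (j : ℝ) := by ring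
    rw [harith] at hmain
    exact Tendsto.congr' (Filter.EventuallyEq.symm heq) hmain
  · -- part 2: Legendre
    have hkpos : (1 : ℝ) ≤ (k : ℝ) := by exact_mod_cast hk
    have hjk' : (j : ℝ) ≤ (k : ℝ) := by exact_mod_cast hjk
    set c : ℝ := (k : ℝ) * lam + (k : ℝ) - 1 with hc
    have hcgt : (2 * (j : ℝ) - 1) < c := by rw [hc]; nlinarith
    set θ : ℝ := (c + (2 * (j : ℝ) - 1)) / 2 with hθ
    have hθlt : θ < c := by rw [hθ]; linarith
    have hθgt : (2 * (j : ℝ) - 1) < θ := by rw [hθ]; linarith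
    set δ : ℝ := θ - (2 * (j : ℝ) - 1) with hδ
    have hδ0 : 0 < δ := by rw [hδ]; linarith
    set M : ℝ := |(j : ℝ) * ζ ^ (j - 1)| + 1 with hM
    have hM0 : 0 < M := by positivity
    have e2 : ∀ᶠ n in atTop, θ < -Real.log |s n * ζ - r n| / Real.log (s n) :=
      hlim.eventually (eventually_gt_nhds hθlt)
    have e3 : ∀ᶠ n in atTop, |T n| < M :=
      hTlim.abs.eventually (eventually_lt_nhds (by rw [hM]; linarith))
    have e4 : ∀ᶠ n in atTop, 2 * M < (s n) ^ δ :=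
      ((tendsto_rpow_atTop hδ0).comp hstop).eventually_gt_atTop (2 * M)
    have hall := (hstop.eventually_ge_atTop 2).and (e2.and (e3.and e4))
    rw [eventually_atTop] at hall
    obtain ⟨N, hN⟩ := hall
    refine ⟨N, fun n hn => ?_⟩
    obtain ⟨hn2, hLθ, hTM, hsδ⟩ := hN n hn
    have hs0 : (0 : ℝ) < s n := by linarith
    have hlogpos : 0 < Real.log (s n) := Real.log_pos (by linarith)
    obtain ⟨⟨a, ha⟩, ⟨b, hb⟩⟩ := num_den_int ζ n
    have hra : r n = (a : ℝ) := by rw [hr]; exact ha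
    have hsb : s n = (b : ℝ) := by rw [hs]; exact hb
    have hbpos : 0 < b := by
      have : (0 : ℝ) < (b : ℝ) := hsb ▸ hs0
      exact_mod_cast this
    set q : ℚ := (a : ℚ) ^ j / (b : ℚ) ^ j with hq
    have hqval : (q : ℝ) = (r n) ^ j / (s n) ^ j := by rw [hq, hra, hsb]; push_cast; ring
    have hqden : (q.den : ℝ) ≤ (s n) ^ j := by
      have h0 : q = ((a ^ j : ℤ) : ℚ) / ((b ^ j : ℤ) : ℚ) := by rw [hq]; push_cast; ring
      have hdvd : ((q.den : ℤ)) ∣ (b ^ j) := by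
        rw [h0, ← Rat.divInt_eq_div]; exact Rat.den_dvd _ _
      have hle : (q.den : ℤ) ≤ b ^ j := Int.le_of_dvd (pow_pos hbpos j) hdvd
      rw [hsb]
      calc ((q.den : ℝ)) ≤ ((b ^ j : ℤ) : ℝ) := by exact_mod_cast hle
        _ = (b : ℝ) ^ j := by push_cast; ring
    have hq0 : (0 : ℝ) < (q.den : ℝ) := by exact_mod_cast q.pos
    have hdist : |ζ ^ j - (q : ℝ)| = |s n * ζ - r n| * |T n| / s n := by
      have h1 : ζ ^ j - (q : ℝ) = ((s n) ^ j * ζ ^ j - (r n) ^ j) / (s n) ^ j := by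
        rw [hqval]; field_simp
      have h2 : (s n) ^ j = (s n) ^ (j - 1) * s n := by
        rw [← pow_succ]; congr 1; omega
      rw [h1, abs_div, abs_of_pos (pow_pos hs0 j), hkey n hs0.ne', abs_mul, abs_mul,
        abs_pow, abs_of_pos hs0, h2]
      field_simp
    have hεpos : 0 < |s n * ζ - r n| := abs_pos.mpr (hne n)
    have hεlt : |s n * ζ - r n| < (s n) ^ (-θ) := by
      have h3 : Real.log |s n * ζ - r n| < -(θ * Real.log (s n)) := by
        have h4 := (lt_div_iff₀ hlogpos).mp hLθ
        linarith
      calc |s n * ζ - r n| = Real.exp (Real.log |s n * ζ - r n|) := (Real.exp_log hεpos).symm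
        _ < Real.exp (-(θ * Real.log (s n))) := Real.exp_lt_exp.mpr h3
        _ = (s n) ^ (-θ) := by rw [Real.rpow_def_of_pos hs0]; ring_nf
    have hrpos : (0 : ℝ) < (s n) ^ (-θ) := Real.rpow_pos_of_pos hs0 _
    have hmainlt : |ζ ^ j - (q : ℝ)| < 1 / (2 * ((s n) ^ j) ^ 2) := by
      rw [hdist, div_lt_div_iff₀ hs0 (by positivity)]
      have hstep : |s n * ζ - r n| * |T n| * (2 * ((s n) ^ j) ^ 2) <
          (s n) ^ (-θ) * M * (2 * ((s n) ^ j) ^ 2) := by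
        apply mul_lt_mul_of_pos_right _ (by positivity)
        calc |s n * ζ - r n| * |T n| ≤ |s n * ζ - r n| * M := by
              apply mul_le_mul_of_nonneg_left hTM.le hεpos.le
          _ < (s n) ^ (-θ) * M := mul_lt_mul_of_pos_right hεlt hM0
      refine hstep.trans_le ?_
      have he1 : ((s n) ^ j) ^ 2 = (s n) ^ ((j * 2 : ℕ) : ℝ) := by
        rw [← pow_mul, Real.rpow_natCast]
      have he2 : (s n) ^ (-θ) * (s n) ^ ((j * 2 : ℕ) : ℝ) = (s n) ^ (((j * 2 : ℕ) : ℝ) - θ) := by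
        rw [← Real.rpow_add hs0]; congr 1; ring
      calc (s n) ^ (-θ) * M * (2 * ((s n) ^ j) ^ 2)
          = (2 * M) * ((s n) ^ (-θ) * (s n) ^ ((j * 2 : ℕ) : ℝ)) := by rw [he1]; ring
        _ = (2 * M) * (s n) ^ (((j * 2 : ℕ) : ℝ) - θ) := by rw [he2]
        _ ≤ (s n) ^ δ * (s n) ^ (((j * 2 : ℕ) : ℝ) - θ) := by
            apply mul_le_mul_of_nonneg_right hsδ.le (Real.rpow_pos_of_pos hs0 _).le
        _ = (s n) ^ (δ + (((j * 2 : ℕ) : ℝ) - θ)) := (Real.rpow_add hs0 _ _).symm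
        _ = (s n) ^ (1 : ℝ) := by
            congr 1
            rw [hδ]
            push_cast
            ring
        _ = 1 * s n := by rw [Real.rpow_one, one_mul]
    have hfinal : |ζ ^ j - (q : ℝ)| < 1 / (2 * (q.den : ℝ) ^ 2) := by
      refine hmainlt.trans_le ?_
      apply one_div_le_one_div_of_le (by positivity)
      nlinarith [hq0, hqden]
    obtain ⟨m, hm⟩ := Real.exists_convs_eq_rat hfinal
    exact ⟨m, by rw [hm, hqval]⟩
end
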